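/- Gradient of the marginal negative log-likelihood with respect to the random-effect variances: for i = 1, …, m let Z_i be a real n_i × q matrix, Λ_i a symmetric positive definite n_i × n_i real matrix, and ξ_i ∈ ℝ^{n_i}, and define Ω_i(γ) = Z_i·Diag(γ)·Z_iᵀ + Λ_i and L(γ) = Σ_{i=1}^m [(1/2) ξ_iᵀ Ω_i(γ)^{-1} ξ_i + (1/2) log det Ω_i(γ)]. At any γ ∈ ℝ^q where every Ω_i(γ) is positive definite, the partial derivative of L with respect to γ_j equals (1/2) Σ_{i=1}^m [ (z_i^j)ᵀ Ω_i(γ)^{-1} z_i^j − ((z_i^j)ᵀ Ω_i(γ)^{-1} ξ_i)² ], where z_i^j denotes the j-th column of Z_i. -/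

import Mathlib

open Matrix

set_option linter.unusedSectionVars false
set_option linter.unusedVariables false

section Helpers
variable {N : Type*} [Fintype N] [DecidableEq N]


lemma vmv_mul (v u : N → ℝ) (M : Matrix N N ℝ) :
    vecMulVec v u * M = vecMulVec v (u ᵥ* M) := by
  ext a b
  simp [vecMulVec_apply, mul_apply, vecMul, dotProduct, Finset.mul_sum, mul_assoc]

lemma mul_vmv (v u : N → ℝ) (M : Matrix N N ℝ) :
    M * vecMulVec v u = vecMulVec (M *ᵥ v) u := by
  ext a b
  simp [vecMulVec_apply, mul_apply, mulVec, dotProduct, Finset.sum_mul, mul_assoc]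

lemma vmv_mul_vmv (a b c d : N → ℝ) :
    vecMulVec a b * vecMulVec c d = (b ⬝ᵥ c) • vecMulVec a d := by
  ext i k
  simp [vecMulVec_apply, mul_apply, dotProduct, Finset.mul_sum, Finset.sum_mul]
  congr 1; ext l; ring

lemma vmv_mulVec (a b u : N → ℝ) : vecMulVec a b *ᵥ u = (b ⬝ᵥ u) • a := by
  ext i
  simp [vecMulVec_apply, mulVec, dotProduct, Finset.mul_sum, Finset.sum_mul]
  congr 1; ext l; ring

lemma det_step (A : Matrix N N ℝ) (hA : IsUnit A.det) (v : N → ℝ) (s : ℝ) :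
    (A + s • vecMulVec v v).det = A.det * (1 + s * (v ⬝ᵥ A⁻¹ *ᵥ v)) := by
  have h1 : s • vecMulVec v v = vecMulVec (s • v) v := by
    ext a b; simp [vecMulVec_apply, mul_assoc]
  rw [h1, vecMulVec_eq Unit, det_add_replicateCol_mul_replicateRow hA]
  congr 1
  rw [det_unique]
  simp [mul_apply, Pi.add_apply, Matrix.one_apply, col_apply, row_apply, dotProduct,
    mulVec, Finset.mul_sum, Finset.sum_mul]
  rw [Finset.sum_comm]
  refine Finset.sum_congr rfl fun a _ => Finset.sum_congr rfl fun b _ => by ring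

lemma sm (A : Matrix N N ℝ) (hA : IsUnit A.det) (v : N → ℝ) (s : ℝ)
    (h : 1 + s * (v ⬝ᵥ A⁻¹ *ᵥ v) ≠ 0) :
    (A + s • vecMulVec v v)⁻¹ =
      A⁻¹ - (s / (1 + s * (v ⬝ᵥ A⁻¹ *ᵥ v))) • (A⁻¹ * (vecMulVec v v * A⁻¹)) := by
  set w := v ⬝ᵥ A⁻¹ *ᵥ v with hw
  set k := s / (1 + s * w) with hk
  apply inv_eq_right_inv
  have hAA : A * A⁻¹ = 1 := mul_nonsing_inv A hA
  have hAA2 : ∀ M : Matrix N N ℝ, A * (A⁻¹ * M) = M := fun M => by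
    rw [← Matrix.mul_assoc, hAA, Matrix.one_mul]
  have key : vecMulVec v v * A⁻¹ * vecMulVec v v = w • vecMulVec v v := by
    rw [vmv_mul, vmv_mul_vmv]
    congr 1
    rw [hw, dotProduct_mulVec]
  have key2 : vecMulVec v v * (A⁻¹ * (vecMulVec v v * A⁻¹)) = w • (vecMulVec v v * A⁻¹) := by
    rw [← Matrix.mul_assoc, ← Matrix.mul_assoc, key, smul_mul_assoc]
  simp only [Matrix.add_mul, Matrix.mul_sub, Matrix.smul_mul, Matrix.mul_smul, hAA, hAA2,
    key2, smul_smul]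
  have hcoef : k • (vecMulVec v v * A⁻¹ + (s * w) • (vecMulVec v v * A⁻¹))
      = s • (vecMulVec v v * A⁻¹) := by
    rw [smul_add, smul_smul, ← add_smul]
    congr 1
    rw [hk]
    field_simp
  rw [hcoef, add_sub_cancel_right]

lemma group_deriv (A : Matrix N N ℝ) (hA : A.PosDef) (v ξ : N → ℝ) (c : ℝ) :
    HasDerivAt (fun t => (1/2 : ℝ) * (ξ ⬝ᵥ (A + (t - c) • vecMulVec v v)⁻¹ *ᵥ ξ)
        + (1/2 : ℝ) * Real.log (A + (t - c) • vecMulVec v v).det)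
      ((1/2 : ℝ) * (v ⬝ᵥ A⁻¹ *ᵥ v - (v ⬝ᵥ A⁻¹ *ᵥ ξ) ^ 2)) c := by
  have hAd : (0 : ℝ) < A.det := hA.det_pos
  have hAu : IsUnit A.det := (isUnit_iff_ne_zero).mpr (ne_of_gt hAd)
  set w := v ⬝ᵥ A⁻¹ *ᵥ v with hw
  set p := v ⬝ᵥ A⁻¹ *ᵥ ξ with hp
  set r := ξ ⬝ᵥ A⁻¹ *ᵥ ξ with hr
  set g : ℝ → ℝ := fun t => (1/2 : ℝ) * (r - ((t - c) * p ^ 2) / (1 + (t - c) * w))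
      + (1/2 : ℝ) * Real.log (A.det * (1 + (t - c) * w)) with hgdef
  have h0 : HasDerivAt (fun t : ℝ => t - c) 1 c := (hasDerivAt_id c).sub_const c
  have hden : HasDerivAt (fun t : ℝ => 1 + (t - c) * w) w c := by
    simpa using (h0.mul_const w).const_add 1
  have hnum : HasDerivAt (fun t : ℝ => (t - c) * p ^ 2) (p ^ 2) c := by
    simpa using h0.mul_const (p ^ 2)
  have hden0 : 1 + (c - c) * w ≠ 0 := by norm_num
  have hdiv : HasDerivAt (fun t : ℝ => ((t - c) * p ^ 2) / (1 + (t - c) * w)) (p ^ 2) c := by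
    have := hnum.div hden hden0
    exact this.congr_deriv (by simp)
  have hlogarg : HasDerivAt (fun t : ℝ => A.det * (1 + (t - c) * w)) (A.det * w) c :=
    hden.const_mul A.det
  have hlog : HasDerivAt (fun t : ℝ => Real.log (A.det * (1 + (t - c) * w)))
      ((A.det * w) / (A.det * (1 + (c - c) * w))) c := by
    apply hlogarg.log
    simp [ne_of_gt hAd]
  have hg : HasDerivAt g ((1/2 : ℝ) * (w - p ^ 2)) c := by
    have := ((hdiv.const_sub r).const_mul (1/2 : ℝ)).add (hlog.const_mul (1/2 : ℝ))
    refine this.congr_deriv ?_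
    rw [sub_self, zero_mul, add_zero, mul_one, mul_div_cancel_left₀ _ (ne_of_gt hAd)]
    ring
  apply hg.congr_of_eventuallyEq
  have hcont : ContinuousAt (fun t : ℝ => 1 + (t - c) * w) c := by fun_prop
  have hev : ∀ᶠ t in nhds c, 1 + (t - c) * w ≠ 0 := hcont.eventually_ne (by norm_num)
  filter_upwards [hev] with t ht
  have hT : (A⁻¹)ᵀ = A⁻¹ := by
    have := hA.isHermitian.inv
    simpa [Matrix.IsHermitian, Matrix.conjTranspose_eq_transpose_of_trivial] using this
  have hps : ξ ⬝ᵥ A⁻¹ *ᵥ v = p := by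
    rw [hp, dotProduct_mulVec,
      show ξ ᵥ* A⁻¹ = A⁻¹ *ᵥ ξ from by rw [← hT, Matrix.vecMul_transpose, hT],
      dotProduct_comm]
  rw [hgdef]
  simp only
  rw [sm A hAu v (t - c) ht, det_step A hAu v (t - c), Matrix.sub_mulVec,
    dotProduct_sub, Matrix.smul_mulVec, dotProduct_smul, ← Matrix.mulVec_mulVec,
    ← Matrix.mulVec_mulVec, vmv_mulVec, Matrix.mulVec_smul, dotProduct_smul, hps]
  rw [← hp, ← hr, ← hw]
  simp only [smul_eq_mul]
  field_simp

lemma update_decomp {K : Type*} [Fintype K] [DecidableEq K] (Z : Matrix N K ℝ)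
    (γ : K → ℝ) (j : K) (t : ℝ) :
    Z * diagonal (Function.update γ j t) * Zᵀ
      = Z * diagonal γ * Zᵀ + (t - γ j) • vecMulVec (Zᵀ j) (Zᵀ j) := by
  have h1 : Function.update γ j t = γ + Pi.single j (t - γ j) := by
    ext k
    by_cases h : k = j
    · subst h; simp
    · simp [Function.update_apply, h, Pi.single_apply]
  ext a b
  simp [h1, mul_apply, diagonal_apply, mul_diagonal, Pi.add_apply, Pi.single_apply, vecMulVec_apply,
    transpose_apply, mul_ite, ite_mul, mul_add, add_mul, Finset.sum_add_distrib,
    Finset.sum_ite_eq']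
  ring


end Helpers

/-- Gradient of the marginal negative log-likelihood with respect to the random-effect
variances: with `Ωᵢ(γ) = Zᵢ·Diag(γ)·Zᵢᵀ + Λᵢ` positive definite at `γ` for every group
`i`, the partial derivative with respect to `γⱼ` of
`L(γ) = ∑ i, (1/2) ξᵢᵀ Ωᵢ(γ)⁻¹ ξᵢ + (1/2) log det Ωᵢ(γ)` equals
`(1/2) ∑ i, (zᵢʲᵀ Ωᵢ(γ)⁻¹ zᵢʲ − (zᵢʲᵀ Ωᵢ(γ)⁻¹ ξᵢ)²)`, where `zᵢʲ` is the `j`-th column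
of `Zᵢ`. -/
theorem gradient_marginal_nll_wrt_variances {m q : ℕ} (n : Fin m → ℕ)
    (Z : ∀ i, Matrix (Fin (n i)) (Fin q) ℝ)
    (Λ : ∀ i, Matrix (Fin (n i)) (Fin (n i)) ℝ)
    (hΛ : ∀ i, (Λ i).PosDef)
    (ξ : ∀ i, Fin (n i) → ℝ)
    (γ : Fin q → ℝ) (j : Fin q)
    (hpos : ∀ i, (Z i * Matrix.diagonal γ * (Z i)ᵀ + Λ i).PosDef) :
    HasDerivAt
      (fun t : ℝ => ∑ i,
        ((1 / 2 : ℝ) *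
            (ξ i ⬝ᵥ ((Z i * Matrix.diagonal (Function.update γ j t) * (Z i)ᵀ + Λ i)⁻¹ *ᵥ ξ i)) +
          (1 / 2 : ℝ) *
            Real.log (Z i * Matrix.diagonal (Function.update γ j t) * (Z i)ᵀ + Λ i).det))
      ((1 / 2 : ℝ) * ∑ i,
        ((Z i)ᵀ j ⬝ᵥ ((Z i * Matrix.diagonal γ * (Z i)ᵀ + Λ i)⁻¹ *ᵥ (Z i)ᵀ j) -
          ((Z i)ᵀ j ⬝ᵥ ((Z i * Matrix.diagonal γ * (Z i)ᵀ + Λ i)⁻¹ *ᵥ ξ i)) ^ 2))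
      (γ j) := by
  have hfun : ∀ (i) (t : ℝ), Z i * Matrix.diagonal (Function.update γ j t) * (Z i)ᵀ + Λ i
      = (Z i * Matrix.diagonal γ * (Z i)ᵀ + Λ i)
        + (t - γ j) • vecMulVec ((Z i)ᵀ j) ((Z i)ᵀ j) := by
    intro i t
    rw [update_decomp]
    rw [add_right_comm]
  have hder : ∀ i ∈ Finset.univ, HasDerivAt
      (fun t : ℝ =>
        (1 / 2 : ℝ) *
            (ξ i ⬝ᵥ ((Z i * Matrix.diagonal (Function.update γ j t) * (Z i)ᵀ + Λ i)⁻¹ *ᵥ ξ i)) +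
          (1 / 2 : ℝ) *
            Real.log (Z i * Matrix.diagonal (Function.update γ j t) * (Z i)ᵀ + Λ i).det)
      ((1 / 2 : ℝ) *
        ((Z i)ᵀ j ⬝ᵥ ((Z i * Matrix.diagonal γ * (Z i)ᵀ + Λ i)⁻¹ *ᵥ (Z i)ᵀ j) -
          ((Z i)ᵀ j ⬝ᵥ ((Z i * Matrix.diagonal γ * (Z i)ᵀ + Λ i)⁻¹ *ᵥ ξ i)) ^ 2))
      (γ j) := by
    intro i _
    have heq : (fun t : ℝ =>
        (1 / 2 : ℝ) *
            (ξ i ⬝ᵥ ((Z i * Matrix.diagonal (Function.update γ j t) * (Z i)ᵀ + Λ i)⁻¹ *ᵥ ξ i)) +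
          (1 / 2 : ℝ) *
            Real.log (Z i * Matrix.diagonal (Function.update γ j t) * (Z i)ᵀ + Λ i).det)
        = (fun t : ℝ =>
        (1 / 2 : ℝ) *
            (ξ i ⬝ᵥ (((Z i * Matrix.diagonal γ * (Z i)ᵀ + Λ i)
              + (t - γ j) • vecMulVec ((Z i)ᵀ j) ((Z i)ᵀ j))⁻¹ *ᵥ ξ i)) +
          (1 / 2 : ℝ) *
            Real.log ((Z i * Matrix.diagonal γ * (Z i)ᵀ + Λ i)
              + (t - γ j) • vecMulVec ((Z i)ᵀ j) ((Z i)ᵀ j)).det) :=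
      funext fun t => by rw [hfun i t]
    rw [heq]
    exact group_deriv _ (hpos i) _ _ _
  have hsum := HasDerivAt.fun_sum hder
  rw [Finset.mul_sum]
  exact hsum
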